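/- Let G = (S, s0, 𝔸, κ, L) be a CGS, ṡ ∈ S, φ' a HyperATL*_S state formula with free path variables V ∪ {π}, A ⊆ Agts, ξ a sharing constraint with ξ ⊆ (A×A) ∪ (Ā×Ā), D a DPA over alphabet (V ∪ {π}) → S that is (G, ṡ)-equivalent to φ', and A^× the APA obtained from the product construction for the existential quantifier ⟪A⟫_ξ π. Then for every path assignment Π : V → S^ω: if ṡ, Π ⊨_G ⟪A⟫_ξ π. φ', then zip(Π) ∈ L(A^×). -/

import Mathlib

namespace HyperATLS

attribute [local instance] Classical.propDecidable

set_option linter.unusedVariables false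

/-! ### Concurrent game structures, strategies, plays -/

/-- Nonempty finite sequences over `S`. -/
abbrev NEList (S : Type) : Type := {l : List S // l ≠ []}

/-- A concurrent game structure with agents `Agt`, atomic propositions `AP`,
states `S` and actions `Act`. -/
structure CGS (Agt AP S Act : Type) where
  init : S
  trans : S → (Agt → Act) → S
  label : S → Set AP

/-- A strategy maps nonempty finite sequences of states to actions. -/
abbrev Strategy (S Act : Type) : Type := NEList S → Act

variable {Agt AP S Act Var : Type}

/-- The history `[p 0, …, p k]` of the play from `s` under the strategy vector `F`. -/
def CGS.hist (G : CGS Agt AP S Act) (s : S) (F : Agt → Strategy S Act) : ℕ → NEList S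
  | 0 => ⟨[s], by simp⟩
  | k + 1 =>
    let h := G.hist s F k
    ⟨h.1 ++ [G.trans (h.1.getLast h.2) fun i => F i h], by simp⟩

/-- `Play_G(s, F)`, the `k`-th state of the unique play from `s` under `F`. -/
def CGS.play (G : CGS Agt AP S Act) (s : S) (F : Agt → Strategy S Act) (k : ℕ) : S :=
  (G.hist s F k).1.getLast (G.hist s F k).2

/-- Combine a strategy vector for `A` with one for the complement `Aᶜ`:  `F ⊕ F'`. -/
noncomputable def combine (A : Set Agt) (F : ↥A → Strategy S Act)
    (F' : ↥(Aᶜ) → Strategy S Act) : Agt → Strategy S Act := fun i =>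
  if h : i ∈ A then F ⟨i, h⟩ else F' ⟨i, h⟩

/-- `shr_G(A, ξ)`: strategy vectors for `A` in which agents related by `ξ` share strategies. -/
def shr (A : Set Agt) (ξ : Set (Agt × Agt)) : Set (↥A → Strategy S Act) :=
  {F | ∀ i j : ↥A, ((i : Agt), (j : Agt)) ∈ ξ → F i = F j}

/-! ### HyperATL*_S syntax -/

mutual
/-- HyperATL*_S path formulas. -/
inductive HPath (Agt AP Var : Type) : Type where
  | atom : AP → Var → HPath Agt AP Var
  | conj : HPath Agt AP Var → HPath Agt AP Var → HPath Agt AP Var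
  | neg : HPath Agt AP Var → HPath Agt AP Var
  | next : HPath Agt AP Var → HPath Agt AP Var
  | untl : HPath Agt AP Var → HPath Agt AP Var → HPath Agt AP Var
  | state : HState Agt AP Var → Var → HPath Agt AP Var

/-- HyperATL*_S state formulas. -/
inductive HState (Agt AP Var : Type) : Type where
  | ex : Set Agt → Set (Agt × Agt) → Var → HState Agt AP Var → HState Agt AP Var
  | all : Set Agt → Set (Agt × Agt) → Var → HState Agt AP Var → HState Agt AP Var
  | path : HPath Agt AP Var → HState Agt AP Var
end

/-- Partial path assignments: `Π : V ⇀ S^ω`. -/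
abbrev PathAssign (Var S : Type) : Type := Var → Option (ℕ → S)

/-- `Π[k,∞]`: shift every assigned path by `k`. -/
def shiftPA (Pa : PathAssign Var S) (k : ℕ) : PathAssign Var S :=
  fun v => (Pa v).map fun p n => p (n + k)

/-! ### HyperATL*_S semantics -/

mutual
/-- `Π ⊨_G ψ` for path formulas. -/
def HPath.sat (G : CGS Agt AP S Act) (Pa : PathAssign Var S) :
    HPath Agt AP Var → Prop
  | .atom a π => ∃ p, Pa π = some p ∧ a ∈ G.label (p 0)
  | .conj ψ₁ ψ₂ => HPath.sat G Pa ψ₁ ∧ HPath.sat G Pa ψ₂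
  | .neg ψ => ¬ HPath.sat G Pa ψ
  | .next ψ => HPath.sat G (shiftPA Pa 1) ψ
  | .untl ψ₁ ψ₂ => ∃ k, HPath.sat G (shiftPA Pa k) ψ₂ ∧
      ∀ m, m < k → HPath.sat G (shiftPA Pa m) ψ₁
  | .state φ π => ∃ p, Pa π = some p ∧ HState.sat G (p 0) (fun _ => none) φ

/-- `s, Π ⊨_G φ` for state formulas. -/
def HState.sat (G : CGS Agt AP S Act) (s : S) (Pa : PathAssign Var S) :
    HState Agt AP Var → Prop
  | .ex A ξ π φ => ∃ F : ↥A → Strategy S Act, F ∈ shr A ξ ∧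
      ∀ F' : ↥(Aᶜ) → Strategy S Act, F' ∈ shr (Aᶜ) ξ →
        HState.sat G s (Function.update Pa π (some (G.play s (combine A F F')))) φ
  | .all A ξ π φ => ∀ F : ↥A → Strategy S Act, F ∈ shr A ξ →
      ∃ F' : ↥(Aᶜ) → Strategy S Act, F' ∈ shr (Aᶜ) ξ ∧
        HState.sat G s (Function.update Pa π (some (G.play s (combine A F F')))) φ
  | .path ψ => HPath.sat G Pa ψ
end

/-- `G ⊨ φ`. -/
def CGS.models (G : CGS Agt AP S Act) (φ : HState Agt AP Var) : Prop :=
  HState.sat G G.init (fun _ => none) φ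

/-! ### Closedness, free variables, atomic propositions, substitution -/

mutual
/-- Well-formedness of a path formula w.r.t. a set `B` of bound path variables:
every indexed atom lies under a binding quantifier and nested state formulas are closed. -/
def HPath.wf (B : Set Var) : HPath Agt AP Var → Prop
  | .atom _ π => π ∈ B
  | .conj ψ₁ ψ₂ => HPath.wf B ψ₁ ∧ HPath.wf B ψ₂
  | .neg ψ => HPath.wf B ψ
  | .next ψ => HPath.wf B ψ
  | .untl ψ₁ ψ₂ => HPath.wf B ψ₁ ∧ HPath.wf B ψ₂
  | .state φ π => π ∈ B ∧ HState.wf (∅ : Set Var) φ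

/-- Well-formedness of a state formula w.r.t. a set `B` of bound path variables. -/
def HState.wf (B : Set Var) : HState Agt AP Var → Prop
  | .ex _ _ π φ => HState.wf (insert π B) φ
  | .all _ _ π φ => HState.wf (insert π B) φ
  | .path ψ => HPath.wf B ψ
end

/-- A state formula is closed if all its indexed atoms are bound. -/
def HState.Closed (φ : HState Agt AP Var) : Prop := HState.wf (∅ : Set Var) φ

mutual
/-- Free path variables of a path formula. -/
def HPath.freeP : HPath Agt AP Var → Set Var
  | .atom _ π => {π}
  | .conj ψ₁ ψ₂ => HPath.freeP ψ₁ ∪ HPath.freeP ψ₂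
  | .neg ψ => HPath.freeP ψ
  | .next ψ => HPath.freeP ψ
  | .untl ψ₁ ψ₂ => HPath.freeP ψ₁ ∪ HPath.freeP ψ₂
  | .state φ π => insert π (HState.freeS φ)

/-- Free path variables of a state formula. -/
def HState.freeS : HState Agt AP Var → Set Var
  | .ex _ _ π φ => HState.freeS φ \ {π}
  | .all _ _ π φ => HState.freeS φ \ {π}
  | .path ψ => HPath.freeP ψ
end

mutual
/-- Atomic propositions occurring in a path formula. -/
def HPath.apsP : HPath Agt AP Var → Set AP
  | .atom a _ => {a}
  | .conj ψ₁ ψ₂ => HPath.apsP ψ₁ ∪ HPath.apsP ψ₂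
  | .neg ψ => HPath.apsP ψ
  | .next ψ => HPath.apsP ψ
  | .untl ψ₁ ψ₂ => HPath.apsP ψ₁ ∪ HPath.apsP ψ₂
  | .state φ _ => HState.apsS φ

/-- Atomic propositions occurring in a state formula. -/
def HState.apsS : HState Agt AP Var → Set AP
  | .ex _ _ _ φ => HState.apsS φ
  | .all _ _ _ φ => HState.apsS φ
  | .path ψ => HPath.apsP ψ
end

mutual
/-- Replace every occurrence of the nested state-formula atom `φ'_ρ` by the
indexed atomic proposition `p_ρ`. -/
noncomputable def HPath.substN (φ' : HState Agt AP Var) (p : AP) :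
    HPath Agt AP Var → HPath Agt AP Var
  | .atom a π => .atom a π
  | .conj ψ₁ ψ₂ => .conj (HPath.substN φ' p ψ₁) (HPath.substN φ' p ψ₂)
  | .neg ψ => .neg (HPath.substN φ' p ψ)
  | .next ψ => .next (HPath.substN φ' p ψ)
  | .untl ψ₁ ψ₂ => .untl (HPath.substN φ' p ψ₁) (HPath.substN φ' p ψ₂)
  | .state φ π => if φ = φ' then .atom p π else .state (HState.substN φ' p φ) π

/-- Substitution on state formulas. -/
noncomputable def HState.substN (φ' : HState Agt AP Var) (p : AP) :
    HState Agt AP Var → HState Agt AP Var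
  | .ex A ξ π φ => .ex A ξ π (HState.substN φ' p φ)
  | .all A ξ π φ => .all A ξ π (HState.substN φ' p φ)
  | .path ψ => .path (HPath.substN φ' p ψ)
end

/-- A path formula contains no nested state formulas. -/
def HPath.noState : HPath Agt AP Var → Prop
  | .atom _ _ => True
  | .conj ψ₁ ψ₂ => HPath.noState ψ₁ ∧ HPath.noState ψ₂
  | .neg ψ => HPath.noState ψ
  | .next ψ => HPath.noState ψ
  | .untl ψ₁ ψ₂ => HPath.noState ψ₁ ∧ HPath.noState ψ₂
  | .state _ _ => False

/-- A state formula of the form `⟨A₁⟩_{ξ₁} π₁ … ⟨Aₙ⟩_{ξₙ} πₙ. ψ` where the path formula `ψ`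
contains no nested state formulas. -/
def HState.prefixForm : HState Agt AP Var → Prop
  | .ex _ _ _ φ => HState.prefixForm φ
  | .all _ _ _ φ => HState.prefixForm φ
  | .path ψ => HPath.noState ψ

/-! ### ATL* -/

mutual
/-- ATL* path formulas. -/
inductive APath (Agt AP : Type) : Type where
  | atom : AP → APath Agt AP
  | conj : APath Agt AP → APath Agt AP → APath Agt AP
  | neg : APath Agt AP → APath Agt AP
  | next : APath Agt AP → APath Agt AP
  | untl : APath Agt AP → APath Agt AP → APath Agt AP
  | state : AState Agt AP → APath Agt AP

/-- ATL* state formulas. -/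
inductive AState (Agt AP : Type) : Type where
  | ex : Set Agt → APath Agt AP → AState Agt AP
  | all : Set Agt → APath Agt AP → AState Agt AP
end

mutual
/-- `p ⊨_G ψ` for ATL* path formulas. -/
def APath.sat (G : CGS Agt AP S Act) (p : ℕ → S) : APath Agt AP → Prop
  | .atom a => a ∈ G.label (p 0)
  | .conj ψ₁ ψ₂ => APath.sat G p ψ₁ ∧ APath.sat G p ψ₂
  | .neg ψ => ¬ APath.sat G p ψ
  | .next ψ => APath.sat G (fun n => p (n + 1)) ψ
  | .untl ψ₁ ψ₂ => ∃ k, APath.sat G (fun n => p (n + k)) ψ₂ ∧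
      ∀ m, m < k → APath.sat G (fun n => p (n + m)) ψ₁
  | .state φ => AState.sat G (p 0) φ

/-- `s ⊨_G φ` for ATL* state formulas. -/
def AState.sat (G : CGS Agt AP S Act) (s : S) : AState Agt AP → Prop
  | .ex A ψ => ∃ F : ↥A → Strategy S Act, ∀ F' : ↥(Aᶜ) → Strategy S Act,
      APath.sat G (G.play s (combine A F F')) ψ
  | .all A ψ => ∀ F : ↥A → Strategy S Act, ∃ F' : ↥(Aᶜ) → Strategy S Act,
      APath.sat G (G.play s (combine A F F')) ψ
end

/-- `G ⊨_ATL* φ`. -/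
def CGS.modelsATL (G : CGS Agt AP S Act) (φ : AState Agt AP) : Prop :=
  AState.sat G G.init φ

mutual
/-- The translation `[·]` from ATL* path formulas to HyperATL*_S path formulas,
using the single fixed path variable `()`. -/
def APath.toHyper : APath Agt AP → HPath Agt AP Unit
  | .atom a => .atom a ()
  | .conj ψ₁ ψ₂ => .conj (APath.toHyper ψ₁) (APath.toHyper ψ₂)
  | .neg ψ => .neg (APath.toHyper ψ)
  | .next ψ => .next (APath.toHyper ψ)
  | .untl ψ₁ ψ₂ => .untl (APath.toHyper ψ₁) (APath.toHyper ψ₂)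
  | .state φ => .state (AState.toHyper φ) ()

/-- The translation `[·]` from ATL* state formulas to HyperATL*_S state formulas:
each quantifier binds the fixed path variable `()` with the empty sharing constraint. -/
def AState.toHyper : AState Agt AP → HState Agt AP Unit
  | .ex A ψ => .ex A ∅ () (.path (APath.toHyper ψ))
  | .all A ψ => .all A ∅ () (.path (APath.toHyper ψ))
end
/-! ### Alternating parity automata -/

/-- Positive Boolean formulas over `Q`. -/
inductive PosBool (Q : Type) : Type where
  | var : Q → PosBool Q
  | conj : PosBool Q → PosBool Q → PosBool Q
  | disj : PosBool Q → PosBool Q → PosBool Q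

/-- Satisfaction of a positive Boolean formula by a set of states. -/
def PosBool.Sat {Q : Type} (X : Set Q) : PosBool Q → Prop
  | .var q => q ∈ X
  | .conj θ₁ θ₂ => PosBool.Sat X θ₁ ∧ PosBool.Sat X θ₂
  | .disj θ₁ θ₂ => PosBool.Sat X θ₁ ∨ PosBool.Sat X θ₂

/-- An alternating parity automaton with states `Q` over alphabet `Alph`. -/
structure APA (Q Alph : Type) where
  init : Q
  δ : Q → Alph → PosBool Q
  color : Q → ℕ

/-- The minimal color occurring infinitely often in `col` is even. -/
def ParityAccept (col : ℕ → ℕ) : Prop :=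
  ∃ c, Even c ∧ {k | col k = c}.Infinite ∧ ∀ c', c' < c → {k | col k = c'}.Finite

/-- A run tree of an APA `A` on the word `u`: a set `T ⊆ ℕ*` of nodes containing the
root `ε`, labeled by states such that the root is labeled by the initial state and, for
every node `τ ∈ T`, the set of labels of its children satisfies `δ(ℓ(τ), u(|τ|))`. -/
structure RunTree {Q Alph : Type} (A : APA Q Alph) (u : ℕ → Alph) where
  T : Set (List ℕ)
  label : List ℕ → Q
  root_mem : ([] : List ℕ) ∈ T
  root_label : label [] = A.init
  consistent : ∀ τ ∈ T,
    PosBool.Sat {q | ∃ n : ℕ, τ ++ [n] ∈ T ∧ label (τ ++ [n]) = q}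
      (A.δ (label τ) (u τ.length))

/-- The node at depth `k` along the infinite branch `b`. -/
def branchNode (b : ℕ → ℕ) (k : ℕ) : List ℕ := (List.range k).map b

/-- A run tree is accepting if on every infinite branch the minimal color occurring
infinitely often is even. -/
def RunTree.Accepting {Q Alph : Type} {A : APA Q Alph} {u : ℕ → Alph}
    (rt : RunTree A u) : Prop :=
  ∀ b : ℕ → ℕ, (∀ k, branchNode b k ∈ rt.T) →
    ParityAccept fun k => A.color (rt.label (branchNode b k))

/-- The language of an APA. -/
def APA.Lang {Q Alph : Type} (A : APA Q Alph) : Set (ℕ → Alph) :=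
  {u | ∃ rt : RunTree A u, rt.Accepting}

/-- A deterministic parity automaton. -/
structure DPA (Q Alph : Type) where
  init : Q
  δ : Q → Alph → Q
  color : Q → ℕ

/-- The unique run of a DPA on a word. -/
def DPA.run {Q Alph : Type} (D : DPA Q Alph) (u : ℕ → Alph) : ℕ → Q
  | 0 => D.init
  | k + 1 => D.δ (DPA.run D u k) (u k)

/-- The language of a DPA. -/
def DPA.Lang {Q Alph : Type} (D : DPA Q Alph) : Set (ℕ → Alph) :=
  {u | ParityAccept fun k => D.color (D.run u k)}

/-- A DPA viewed as an APA. -/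
def DPA.toAPA {Q Alph : Type} (D : DPA Q Alph) : APA Q Alph where
  init := D.init
  δ := fun q l => .var (D.δ q l)
  color := D.color

/-! ### Zipping, `(G, sDot)`-equivalence and the product construction -/

/-- `zip(Π)`: zip a path assignment into an infinite word. -/
def zipAssign {V S : Type} (Pa : V → ℕ → S) : ℕ → (V → S) := fun k v => Pa v k

/-- View a total assignment on a set `V` of path variables as a partial path assignment. -/
noncomputable def toAssign (V : Set Var) (Pa : ↥V → ℕ → S) : PathAssign Var S :=
  fun v => if h : v ∈ V then some (Pa ⟨v, h⟩) else none

/-- An automaton over the alphabet `↥V → S` is `(G, sDot)`-equivalent to a HyperATL*_S state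
formula `φ` with free path variables `V` iff for every path assignment `Π : V → S^ω`:
`zip(Π) ∈ L(A)` if and only if `sDot, Π ⊨_G φ`. -/
def APAEquiv {Q : Type} (G : CGS Agt AP S Act) (sDot : S) (V : Set Var)
    (A : APA Q (↥V → S)) (φ : HState Agt AP Var) : Prop :=
  ∀ Pa : ↥V → ℕ → S, zipAssign Pa ∈ A.Lang ↔ HState.sat G sDot (toAssign V Pa) φ

/-- Finitary disjunction (over a finite nonempty index type). -/
noncomputable def PosBool.iOr {ι Q : Type} [Finite ι] [Nonempty ι]
    (f : ι → PosBool Q) : PosBool Q :=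
  letI : Fintype ι := Fintype.ofFinite ι
  (Finset.univ.toList.map f).foldl .disj (f (Classical.arbitrary ι))

/-- Finitary conjunction (over a finite nonempty index type). -/
noncomputable def PosBool.iAnd {ι Q : Type} [Finite ι] [Nonempty ι]
    (f : ι → PosBool Q) : PosBool Q :=
  letI : Fintype ι := Fintype.ofFinite ι
  (Finset.univ.toList.map f).foldl .conj (f (Classical.arbitrary ι))

/-- Action vectors for the agents in `A` respecting the sharing constraint `ξ`. -/
abbrev ShrVec (A : Set Agt) (ξ : Set (Agt × Agt)) (Act : Type) : Type :=
  {a : ↥A → Act // ∀ i j : ↥A, ((i : Agt), (j : Agt)) ∈ ξ → a i = a j}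

instance {A : Set Agt} {ξ : Set (Agt × Agt)} [Nonempty Act] :
    Nonempty (ShrVec A ξ Act) :=
  ⟨⟨fun _ => Classical.arbitrary Act, fun _ _ _ => rfl⟩⟩

/-- Combine an action vector for `A` with one for `Aᶜ`: `a ⊕ a'`. -/
noncomputable def combineVec (A : Set Agt) (a : ↥A → Act) (a' : ↥(Aᶜ) → Act) :
    Agt → Act := fun i =>
  if h : i ∈ A then a ⟨i, h⟩ else a' ⟨i, h⟩

/-- `l[π ↦ s]`: extend a letter `l : V → S` to a letter over `V ∪ {π}`. -/
noncomputable def extendLetter {V : Set Var} (π : Var) (l : ↥V → S) (s : S) :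
    ↥(insert π V) → S := fun v =>
  if h : (v : Var) = π then s
  else l ⟨v, (Set.mem_insert_iff.mp v.2).resolve_left h⟩

/-- The product construction for the existential quantifier `⟪A⟫_ξ π`. -/
noncomputable def productEx {Q : Type} [Finite Agt] [Finite Act] [Nonempty Act]
    (G : CGS Agt AP S Act) (sDot : S) (A : Set Agt) (ξ : Set (Agt × Agt))
    (V : Set Var) (π : Var) (D : DPA Q (↥(insert π V) → S)) :
    APA (Q × S) (↥V → S) where
  init := (D.init, sDot)
  δ := fun qs l =>
    PosBool.iOr fun a : ShrVec A ξ Act =>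
      PosBool.iAnd fun a' : ShrVec (Aᶜ) ξ Act =>
        PosBool.var (D.δ qs.1 (extendLetter π l qs.2),
          G.trans qs.2 (combineVec A a.1 a'.1))
  color := fun qs => D.color qs.1

/-- The product construction for the universal quantifier `⟦A⟧_ξ π`. -/
noncomputable def productAll {Q : Type} [Finite Agt] [Finite Act] [Nonempty Act]
    (G : CGS Agt AP S Act) (sDot : S) (A : Set Agt) (ξ : Set (Agt × Agt))
    (V : Set Var) (π : Var) (D : DPA Q (↥(insert π V) → S)) :
    APA (Q × S) (↥V → S) where
  init := (D.init, sDot)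
  δ := fun qs l =>
    PosBool.iAnd fun a : ShrVec A ξ Act =>
      PosBool.iOr fun a' : ShrVec (Aᶜ) ξ Act =>
        PosBool.var (D.δ qs.1 (extendLetter π l qs.2),
          G.trans qs.2 (combineVec A a.1 a'.1))
  color := fun qs => D.color qs.1
/-! ### Concrete alphabets, automata and the running-example CGS -/

/-- The alphabet `Σ = {a, b, c}`. -/
inductive ABC : Type where
  | a | b | c
deriving DecidableEq

/-- States `{q0, q1, q2, q3}` of the example APA. -/
inductive QABC : Type where
  | q0 | q1 | q2 | q3
deriving DecidableEq

/-- The example APA of Example 3: `δ(q0, l) = q0 ∧ (q1 ∨ q2)` for every letter,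
`q1` waits for an `a`, `q2` waits for a `b`, and `q3` is an accepting sink. -/
def exampleAPA : APA QABC ABC where
  init := .q0
  δ := fun q l =>
    match q, l with
    | .q0, _ => .conj (.var .q0) (.disj (.var .q1) (.var .q2))
    | .q1, .a => .var .q3
    | .q1, _ => .var .q1
    | .q2, .b => .var .q3
    | .q2, _ => .var .q2
    | .q3, _ => .var .q3
  color := fun q =>
    match q with
    | .q0 => 0
    | .q1 => 1
    | .q2 => 1
    | .q3 => 0

/-- States `{q1, q3}` of the sub-automaton `A₁`. -/
inductive QA1 : Type where
  | q1 | q3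
deriving DecidableEq

/-- The APA `A₁`: from `q1` move to the accepting sink `q3` on letter `a`. -/
def exampleAPA1 : APA QA1 ABC where
  init := .q1
  δ := fun q l =>
    match q, l with
    | .q1, .a => .var .q3
    | .q1, _ => .var .q1
    | .q3, _ => .var .q3
  color := fun q =>
    match q with
    | .q1 => 1
    | .q3 => 0

/-- The two path variables `π` and `π'`. -/
inductive PVar : Type where
  | pi | pi'
deriving DecidableEq

/-- The states `{s0, s1, s2}` of the running-example CGS. -/
inductive St : Type where
  | s0 | s1 | s2
deriving DecidableEq

/-- The agents `{sched, W1, W2}` of the running-example CGS. -/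
inductive Ag : Type where
  | sched | w1 | w2
deriving DecidableEq

/-- The actions: `g`/`ng` for the scheduler and `r`/`nr` for the workers. -/
inductive ActEx : Type where
  | g | ng | r | nr
deriving DecidableEq

/-- The running-example CGS: granted requests of both workers lead directly to the
working state `s2`; a granted single request passes through `s1`. -/
def exampleCGS : CGS Ag Unit St ActEx where
  init := .s0
  trans := fun s a =>
    match s with
    | .s0 =>
      if a .sched = .g then
        if a .w1 = .r ∧ a .w2 = .r then .s2
        else if a .w1 = .r ∨ a .w2 = .r then .s1
        else .s0
      else .s0
    | .s1 => .s2
    | .s2 => .s0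
  label := fun s =>
    match s with
    | .s2 => {()}
    | _ => (∅ : Set Unit)

/-- The path formula `(¬ w_{π'}) U (¬ w_{π'} ∧ w_π)`, where `w` is the unique atomic
proposition `()`. -/
def exampleBody : HPath Ag Unit PVar :=
  .untl (.neg (.atom () .pi')) (.conj (.neg (.atom () .pi')) (.atom () .pi))

/-- The state formula `⟦{sched, W1}⟧_∅ π'. (¬ w_{π'}) U (¬ w_{π'} ∧ w_π)`. -/
def exampleInner : HState Ag Unit PVar :=
  .all {Ag.sched, Ag.w1} ∅ .pi' (.path exampleBody)

/-- The state formula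
`⟪{sched, W1, W2}⟫_∅ π. ⟦{sched, W1}⟧_∅ π'. (¬ w_{π'}) U (¬ w_{π'} ∧ w_π)`. -/
def exampleFormula : HState Ag Unit PVar :=
  .ex {Ag.sched, Ag.w1, Ag.w2} ∅ .pi exampleInner

/-- States `{q0, q1, q2}` of the example DPA. -/
inductive QD : Type where
  | q0 | q1 | q2
deriving DecidableEq

/-- The example DPA over the alphabet `{π, π'} → {s0, s1, s2}`. -/
def exampleDPA : DPA QD (PVar → St) where
  init := .q0
  δ := fun q l =>
    match q with
    | .q0 => if l .pi' = .s2 then .q2 else if l .pi = .s2 then .q1 else .q0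
    | .q1 => .q1
    | .q2 => .q2
  color := fun q =>
    match q with
    | .q0 => 1
    | .q1 => 0
    | .q2 => 1
/-! ### Auxiliary lemmas for completeness of the existential product -/

section AuxComplete

theorem aux_sat_foldl_disj {Q : Type} {X : Set Q} :
    ∀ (l : List (PosBool Q)) (ini : PosBool Q),
      (PosBool.Sat X ini ∨ ∃ θ ∈ l, PosBool.Sat X θ) →
      PosBool.Sat X (l.foldl .disj ini)
  | [], ini, h => by
      rcases h with h | ⟨θ, hθ, _⟩
      · exact h
      · simp at hθ
  | x :: xs, ini, h => by
      apply aux_sat_foldl_disj xs (.disj ini x)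
      rcases h with h | ⟨θ, hθ, hs⟩
      · exact Or.inl (Or.inl h)
      · rcases List.mem_cons.mp hθ with rfl | hθ
        · exact Or.inl (Or.inr hs)
        · exact Or.inr ⟨θ, hθ, hs⟩

theorem aux_sat_foldl_conj {Q : Type} {X : Set Q} :
    ∀ (l : List (PosBool Q)) (ini : PosBool Q),
      PosBool.Sat X ini → (∀ θ ∈ l, PosBool.Sat X θ) →
      PosBool.Sat X (l.foldl .conj ini)
  | [], _, h, _ => h
  | x :: xs, ini, h, hl => by
      apply aux_sat_foldl_conj xs (.conj ini x) ⟨h, hl x (by simp)⟩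
      exact fun θ hθ => hl θ (by simp [hθ])

theorem aux_sat_iOr {ι Q : Type} [Finite ι] [Nonempty ι] {X : Set Q}
    {f : ι → PosBool Q} (i : ι) (h : PosBool.Sat X (f i)) :
    PosBool.Sat X (PosBool.iOr f) := by
  letI : Fintype ι := Fintype.ofFinite ι
  unfold PosBool.iOr
  exact aux_sat_foldl_disj _ _
    (Or.inr ⟨f i, List.mem_map_of_mem (f := f) (Finset.mem_toList.mpr (Finset.mem_univ i)), h⟩)

theorem aux_sat_iAnd {ι Q : Type} [Finite ι] [Nonempty ι] {X : Set Q}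
    {f : ι → PosBool Q} (h : ∀ i, PosBool.Sat X (f i)) :
    PosBool.Sat X (PosBool.iAnd f) := by
  letI : Fintype ι := Fintype.ofFinite ι
  unfold PosBool.iAnd
  refine aux_sat_foldl_conj _ _ (h _) ?_
  intro θ hθ
  rcases List.mem_map.mp hθ with ⟨i, _, rfl⟩
  exact h i

theorem aux_dpa_run_congr {Q Alph : Type} (D : DPA Q Alph) {u u' : ℕ → Alph} :
    ∀ k, (∀ m, m < k → u m = u' m) → D.run u k = D.run u' k
  | 0, _ => rfl
  | k+1, h => by
      show D.δ (D.run u k) (u k) = D.δ (D.run u' k) (u' k)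
      rw [aux_dpa_run_congr D k (fun m hm => h m (by omega)), h k (by omega)]

theorem aux_hist_length {Agt AP S Act : Type} (G : CGS Agt AP S Act) (s : S)
    (F : Agt → Strategy S Act) : ∀ k, (G.hist s F k).1.length = k + 1
  | 0 => rfl
  | k+1 => by
      show ((G.hist s F k).1 ++ [_]).length = k + 2
      simp [aux_hist_length G s F k]

theorem aux_hist_congr {Agt AP S Act : Type} (G : CGS Agt AP S Act) (s : S)
    (F F₂ : Agt → Strategy S Act) :
    ∀ k, (∀ i (h : NEList S), h.1.length ≤ k → F i h = F₂ i h) →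
      G.hist s F k = G.hist s F₂ k
  | 0, _ => rfl
  | k+1, hc => by
      have ih := aux_hist_congr G s F F₂ k fun i h hh => hc i h (Nat.le_succ_of_le hh)
      apply Subtype.ext
      show (G.hist s F k).1 ++ [G.trans ((G.hist s F k).1.getLast (G.hist s F k).2)
          (fun i => F i (G.hist s F k))] =
        (G.hist s F₂ k).1 ++ [G.trans ((G.hist s F₂ k).1.getLast (G.hist s F₂ k).2)
          (fun i => F₂ i (G.hist s F₂ k))]
      rw [ih]
      have : (fun i => F i (G.hist s F₂ k)) = fun i => F₂ i (G.hist s F₂ k) :=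
        funext fun i => hc i _ (le_of_eq (aux_hist_length G s F₂ k))
      rw [this]

theorem aux_play_congr {Agt AP S Act : Type} (G : CGS Agt AP S Act) (s : S)
    {F F₂ : Agt → Strategy S Act} {k : ℕ} (h : G.hist s F k = G.hist s F₂ k) :
    G.play s F k = G.play s F₂ k := by
  simp only [CGS.play, h]

theorem aux_getLast_eq {α : Type} {l l' : List α} {a : α} (h : l = l' ++ [a])
    (hne : l ≠ []) : l.getLast hne = a := by
  subst h; exact List.getLast_concat

theorem aux_play_zero {Agt AP S Act : Type} (G : CGS Agt AP S Act) (s : S)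
    (F : Agt → Strategy S Act) : G.play s F 0 = s := by
  simp [CGS.play, CGS.hist]

theorem aux_play_succ {Agt AP S Act : Type} (G : CGS Agt AP S Act) (s : S)
    (F : Agt → Strategy S Act) (k : ℕ) :
    G.play s F (k+1) = G.trans (G.play s F k) (fun i => F i (G.hist s F k)) := by
  show (G.hist s F (k+1)).1.getLast (G.hist s F (k+1)).2 = _
  exact aux_getLast_eq rfl _

end AuxComplete
section AuxComplete2

variable {Agt AP S Act Var QQ : Type}

/-- The opponent strategy vector induced by an infinite sequence of shared action
vectors: at a history of length `m + 1`, play the `m`-th action vector. -/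
noncomputable def oppStrat (A : Set Agt) (ξ : Set (Agt × Agt))
    (g : ℕ → ShrVec (Aᶜ) ξ Act) : ↥(Aᶜ) → Strategy S Act :=
  fun i h => (g (h.1.length - 1)).1 i

theorem oppStrat_shr (A : Set Agt) (ξ : Set (Agt × Agt))
    (g : ℕ → ShrVec (Aᶜ) ξ Act) : oppStrat (S := S) A ξ g ∈ shr (Aᶜ) ξ :=
  fun i j hij => funext fun h => (g _).2 i j hij

/-- The full strategy vector obtained by combining `F` with the opponent strategy. -/
noncomputable def fullStrat (A : Set Agt) (ξ : Set (Agt × Agt))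
    (F : ↥A → Strategy S Act) (g : ℕ → ShrVec (Aᶜ) ξ Act) : Agt → Strategy S Act :=
  combine A F (oppStrat A ξ g)

/-- The play induced by `F` and an opponent action sequence. -/
noncomputable def playG (G : CGS Agt AP S Act) (sDot : S) (A : Set Agt)
    (ξ : Set (Agt × Agt)) (F : ↥A → Strategy S Act)
    (g : ℕ → ShrVec (Aᶜ) ξ Act) : ℕ → S :=
  G.play sDot (fullStrat A ξ F g)

/-- The extended word fed to the deterministic automaton. -/
noncomputable def wordG (G : CGS Agt AP S Act) (sDot : S) (A : Set Agt)
    (ξ : Set (Agt × Agt)) {V : Set Var} (π : Var) (Pa : ↥V → ℕ → S)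
    (F : ↥A → Strategy S Act) (g : ℕ → ShrVec (Aᶜ) ξ Act) :
    ℕ → (↥(insert π V) → S) :=
  fun k => extendLetter π (fun v => Pa v k) (playG G sDot A ξ F g k)

theorem fullStrat_agree (A : Set Agt) (ξ : Set (Agt × Agt))
    (F : ↥A → Strategy S Act) {g g' : ℕ → ShrVec (Aᶜ) ξ Act} {k : ℕ}
    (hg : ∀ m, m < k → g m = g' m) :
    ∀ (i : Agt) (h : NEList S), h.1.length ≤ k →
      fullStrat A ξ F g i h = fullStrat A ξ F g' i h := by
  intro i h hlen
  unfold fullStrat combine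
  split
  · rfl
  · show oppStrat A ξ g _ h = oppStrat A ξ g' _ h
    unfold oppStrat
    have h1 : 0 < h.1.length := List.length_pos_iff.mpr h.2
    rw [hg _ (by omega)]

theorem histG_congr (G : CGS Agt AP S Act) (sDot : S) (A : Set Agt)
    (ξ : Set (Agt × Agt)) (F : ↥A → Strategy S Act)
    {g g' : ℕ → ShrVec (Aᶜ) ξ Act} {k : ℕ} (hg : ∀ m, m < k → g m = g' m) :
    G.hist sDot (fullStrat A ξ F g) k = G.hist sDot (fullStrat A ξ F g') k :=
  aux_hist_congr G sDot _ _ k (fullStrat_agree A ξ F hg)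

theorem playG_congr (G : CGS Agt AP S Act) (sDot : S) (A : Set Agt)
    (ξ : Set (Agt × Agt)) (F : ↥A → Strategy S Act)
    {g g' : ℕ → ShrVec (Aᶜ) ξ Act} {k : ℕ} (hg : ∀ m, m < k → g m = g' m) :
    playG G sDot A ξ F g k = playG G sDot A ξ F g' k :=
  aux_play_congr G sDot (histG_congr G sDot A ξ F hg)

theorem runG_congr (G : CGS Agt AP S Act) (sDot : S) (A : Set Agt)
    (ξ : Set (Agt × Agt)) {V : Set Var} (π : Var) (Pa : ↥V → ℕ → S)
    (F : ↥A → Strategy S Act) (D : DPA QQ (↥(insert π V) → S))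
    {g g' : ℕ → ShrVec (Aᶜ) ξ Act} {k : ℕ} (hg : ∀ m, m < k → g m = g' m) :
    D.run (wordG G sDot A ξ π Pa F g) k = D.run (wordG G sDot A ξ π Pa F g') k :=
  aux_dpa_run_congr D k fun m hm => by
    unfold wordG
    rw [playG_congr G sDot A ξ F (fun j hj => hg j (lt_trans hj hm))]

/-- Decoding a node of the run tree into an opponent action sequence. -/
noncomputable def gOf {A : Set Agt} {ξ : Set (Agt × Agt)}
    (dec : ℕ → ShrVec (Aᶜ) ξ Act) (τ : List ℕ) : ℕ → ShrVec (Aᶜ) ξ Act :=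
  fun m => dec (τ.getD m 0)

theorem gOf_append_lt {A : Set Agt} {ξ : Set (Agt × Agt)}
    (dec : ℕ → ShrVec (Aᶜ) ξ Act) (τ l' : List ℕ) {m : ℕ} (hm : m < τ.length) :
    gOf dec (τ ++ l') m = gOf dec τ m := by
  unfold gOf
  rw [List.getD_append _ _ _ _ hm]

theorem gOf_concat_self {A : Set Agt} {ξ : Set (Agt × Agt)}
    (dec : ℕ → ShrVec (Aᶜ) ξ Act) (τ : List ℕ) (n : ℕ) :
    gOf dec (τ ++ [n]) τ.length = dec n := by
  unfold gOf
  rw [List.getD_eq_getElem _ _ (by simp), List.getElem_concat_length rfl]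

/-- The labeling of the run tree of the product automaton. -/
noncomputable def labF (G : CGS Agt AP S Act) (sDot : S) (A : Set Agt)
    (ξ : Set (Agt × Agt)) {V : Set Var} (π : Var) (Pa : ↥V → ℕ → S)
    (F : ↥A → Strategy S Act) (dec : ℕ → ShrVec (Aᶜ) ξ Act)
    (D : DPA QQ (↥(insert π V) → S)) (τ : List ℕ) : QQ × S :=
  (D.run (wordG G sDot A ξ π Pa F (gOf dec τ)) τ.length,
   playG G sDot A ξ F (gOf dec τ) τ.length)

end AuxComplete2
section AuxComplete3

variable {Agt AP S Act Var QQ : Type}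

theorem labF_zero (G : CGS Agt AP S Act) (sDot : S) (A : Set Agt)
    (ξ : Set (Agt × Agt)) {V : Set Var} (π : Var) (Pa : ↥V → ℕ → S)
    (F : ↥A → Strategy S Act) (dec : ℕ → ShrVec (Aᶜ) ξ Act)
    (D : DPA QQ (↥(insert π V) → S)) :
    labF G sDot A ξ π Pa F dec D ([] : List ℕ) = (D.init, sDot) := by
  unfold labF playG
  simp only [List.length_nil]
  rw [aux_play_zero]
  rfl

theorem labF_step (G : CGS Agt AP S Act) (sDot : S) (A : Set Agt)
    (ξ : Set (Agt × Agt)) {V : Set Var} (π : Var) (Pa : ↥V → ℕ → S)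
    (F : ↥A → Strategy S Act) (dec : ℕ → ShrVec (Aᶜ) ξ Act)
    (D : DPA QQ (↥(insert π V) → S)) (τ : List ℕ) (n : ℕ)
    (a' : ShrVec (Aᶜ) ξ Act) (hn : dec n = a') :
    labF G sDot A ξ π Pa F dec D (τ ++ [n]) =
      (D.δ (labF G sDot A ξ π Pa F dec D τ).1
        (extendLetter π (fun v => Pa v τ.length) (labF G sDot A ξ π Pa F dec D τ).2),
       G.trans (labF G sDot A ξ π Pa F dec D τ).2
        (combineVec A
          (fun i => F i (G.hist sDot (fullStrat A ξ F (gOf dec τ)) τ.length)) a'.1)) := by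
  set g := gOf dec τ with hg
  set g' := gOf dec (τ ++ [n]) with hg'
  have hagree : ∀ m, m < τ.length → g m = g' m := fun m hm =>
    (gOf_append_lt dec τ [n] hm).symm
  have hg'k : g' τ.length = a' := by rw [hg', gOf_concat_self, hn]
  have hlen : (τ ++ [n]).length = τ.length + 1 := by simp
  have hhist : G.hist sDot (fullStrat A ξ F g') τ.length =
      G.hist sDot (fullStrat A ξ F g) τ.length :=
    histG_congr G sDot A ξ F fun m hm => (hagree m hm).symm
  unfold labF
  rw [hlen]
  refine Prod.ext ?_ ?_
  · -- first component
    show D.δ (D.run (wordG G sDot A ξ π Pa F g') τ.length)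
        (wordG G sDot A ξ π Pa F g' τ.length) = _
    rw [runG_congr G sDot A ξ π Pa F D fun m hm => (hagree m hm).symm]
    show D.δ _ (extendLetter π (fun v => Pa v τ.length) (playG G sDot A ξ F g' τ.length)) = _
    rw [playG_congr G sDot A ξ F fun m hm => (hagree m hm).symm]
  · -- second component
    show playG G sDot A ξ F g' (τ.length + 1) = _
    unfold playG
    rw [aux_play_succ]
    have hplay : G.play sDot (fullStrat A ξ F g') τ.length =
        playG G sDot A ξ F g τ.length :=
      playG_congr G sDot A ξ F fun m hm => (hagree m hm).symm
    rw [hplay]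
    congr 1
    funext i
    rw [hhist]
    unfold fullStrat combine combineVec oppStrat
    by_cases hi : i ∈ A
    · rw [dif_pos hi, dif_pos hi]
    · rw [dif_neg hi, dif_neg hi, aux_hist_length]
      simp only [Nat.add_sub_cancel]
      rw [hg'k]

/-- Choice of a successor node in a run tree of a DPA viewed as an APA. -/
noncomputable def dpaNext {Alph : Type} (D : DPA QQ Alph) (u : ℕ → Alph)
    (rt : RunTree D.toAPA u) (τ : List ℕ) : ℕ :=
  if h : ∃ n, τ ++ [n] ∈ rt.T ∧ rt.label (τ ++ [n]) = D.δ (rt.label τ) (u τ.length)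
  then h.choose else 0

/-- The canonical branch through a run tree of a DPA viewed as an APA. -/
noncomputable def dpaChain {Alph : Type} (D : DPA QQ Alph) (u : ℕ → Alph)
    (rt : RunTree D.toAPA u) : ℕ → List ℕ
  | 0 => []
  | k+1 => dpaChain D u rt k ++ [dpaNext D u rt (dpaChain D u rt k)]

theorem dpaChain_spec {Alph : Type} (D : DPA QQ Alph) (u : ℕ → Alph)
    (rt : RunTree D.toAPA u) :
    ∀ k, dpaChain D u rt k ∈ rt.T ∧ (dpaChain D u rt k).length = k ∧
      rt.label (dpaChain D u rt k) = D.run u k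
  | 0 => ⟨rt.root_mem, rfl, rt.root_label⟩
  | k+1 => by
      obtain ⟨hT, hlen, hlab⟩ := dpaChain_spec D u rt k
      have hcons := rt.consistent _ hT
      have hex : ∃ n, dpaChain D u rt k ++ [n] ∈ rt.T ∧
          rt.label (dpaChain D u rt k ++ [n]) =
            D.δ (rt.label (dpaChain D u rt k)) (u (dpaChain D u rt k).length) := hcons
      have hstep : dpaChain D u rt (k+1) =
          dpaChain D u rt k ++ [dpaNext D u rt (dpaChain D u rt k)] := rfl
      have hnext : dpaNext D u rt (dpaChain D u rt k) = hex.choose := dif_pos hex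
      obtain ⟨hT', hlab'⟩ := hex.choose_spec
      refine ⟨by rw [hstep, hnext]; exact hT', by simp [hstep, hlen], ?_⟩
      rw [hstep, hnext, hlab']
      show D.δ (rt.label (dpaChain D u rt k)) (u (dpaChain D u rt k).length) =
        D.δ (D.run u k) (u k)
      rw [hlab, hlen]

theorem aux_branchNode_succ (b : ℕ → ℕ) (k : ℕ) :
    branchNode b (k+1) = branchNode b k ++ [b k] := by
  simp [branchNode, List.range_succ]

theorem dpa_toAPA_accept {Alph : Type} (D : DPA QQ Alph) (u : ℕ → Alph)
    (h : u ∈ D.toAPA.Lang) : ParityAccept fun k => D.color (D.run u k) := by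
  obtain ⟨rt, hacc⟩ := h
  have hbn : ∀ k, branchNode (fun m => dpaNext D u rt (dpaChain D u rt m)) k =
      dpaChain D u rt k := by
    intro k
    induction k with
    | zero => rfl
    | succ k ih => rw [aux_branchNode_succ, ih]; rfl
  have hpar := hacc _ (fun k => by rw [hbn]; exact (dpaChain_spec D u rt k).1)
  have hcol : (fun k => D.toAPA.color
      (rt.label (branchNode (fun m => dpaNext D u rt (dpaChain D u rt m)) k))) =
      fun k => D.color (D.run u k) := by
    funext k
    rw [hbn]
    exact congrArg D.color (dpaChain_spec D u rt k).2.2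
  rwa [hcol] at hpar

end AuxComplete3
section AuxComplete4

variable {Agt AP S Act Var QQ : Type}

theorem labF_branch (G : CGS Agt AP S Act) (sDot : S) (A : Set Agt)
    (ξ : Set (Agt × Agt)) {V : Set Var} (π : Var) (Pa : ↥V → ℕ → S)
    (F : ↥A → Strategy S Act) (dec : ℕ → ShrVec (Aᶜ) ξ Act)
    (D : DPA QQ (↥(insert π V) → S)) (b : ℕ → ℕ) (k : ℕ) :
    labF G sDot A ξ π Pa F dec D (branchNode b k) =
      (D.run (wordG G sDot A ξ π Pa F (fun m => dec (b m))) k,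
       playG G sDot A ξ F (fun m => dec (b m)) k) := by
  unfold labF
  have hlen : (branchNode b k).length = k := by simp [branchNode]
  rw [hlen]
  have hag : ∀ m, m < k → gOf dec (branchNode b k) m = dec (b m) := by
    intro m hm
    unfold gOf
    congr 1
    have h1 : m < (branchNode b k).length := by rw [hlen]; exact hm
    rw [List.getD_eq_getElem _ _ h1]
    simp [branchNode]
  exact Prod.ext (runG_congr G sDot A ξ π Pa F D hag) (playG_congr G sDot A ξ F hag)

end AuxComplete4

theorem product_ex_complete
    {Agt AP S Act Var Q : Type} [Finite Agt] [Finite S] [Finite Act] [Nonempty Act] [Finite Q]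
    (G : CGS Agt AP S Act) (sDot : S) (V : Set Var) (π : Var) (hπ : π ∉ V)
    (φ' : HState Agt AP Var) (hfree : HState.freeS φ' = insert π V)
    (A : Set Agt) (ξ : Set (Agt × Agt)) (hξ : ξ ⊆ (A ×ˢ A) ∪ ((Aᶜ) ×ˢ (Aᶜ)))
    (D : DPA Q (↥(insert π V) → S))
    (hD : APAEquiv G sDot (insert π V) D.toAPA φ') :
    ∀ Pa : ↥V → ℕ → S, HState.sat G sDot (toAssign V Pa) (HState.ex A ξ π φ') →
      zipAssign Pa ∈ (productEx G sDot A ξ V π D).Lang := by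
  intro Pa hsat
  simp only [HState.sat] at hsat
  obtain ⟨F, hF, hall⟩ := hsat
  obtain ⟨dec, hdec⟩ : ∃ dec : ℕ → ShrVec (Aᶜ) ξ Act, Function.Surjective dec := by
    obtain ⟨enc, henc⟩ := exists_injective_nat (ShrVec (Aᶜ) ξ Act)
    exact ⟨Function.invFun enc, Function.invFun_surjective henc⟩
  have hδ : (productEx G sDot A ξ V π D).δ = fun qs l =>
      PosBool.iOr fun a : ShrVec A ξ Act =>
        PosBool.iAnd fun a' : ShrVec (Aᶜ) ξ Act =>
          PosBool.var (D.δ qs.1 (extendLetter π l qs.2),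
            G.trans qs.2 (combineVec A a.1 a'.1)) := rfl
  refine ⟨⟨Set.univ, labF G sDot A ξ π Pa F dec D, Set.mem_univ _,
    labF_zero G sDot A ξ π Pa F dec D, ?_⟩, ?_⟩
  · -- consistency
    intro τ _
    rw [hδ]
    apply aux_sat_iOr
      (⟨fun i => F i (G.hist sDot (fullStrat A ξ F (gOf dec τ)) τ.length),
        fun i j hij => by show F i _ = F j _; rw [hF i j hij]⟩ : ShrVec A ξ Act)
    apply aux_sat_iAnd
    intro a'
    obtain ⟨n, hn⟩ := hdec a'
    exact ⟨n, Set.mem_univ _, labF_step G sDot A ξ π Pa F dec D τ n a' hn⟩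
  · -- acceptance
    intro b hb
    have hpar : ParityAccept fun k =>
        D.color (D.run (wordG G sDot A ξ π Pa F (fun m => dec (b m))) k) := by
      have hF' := hall (oppStrat A ξ (fun m => dec (b m))) (oppStrat_shr A ξ _)
      have hassign : toAssign (insert π V)
          (fun v k => extendLetter π (fun v' => Pa v' k)
            (playG G sDot A ξ F (fun m => dec (b m)) k) v) =
          Function.update (toAssign V Pa) π
            (some (playG G sDot A ξ F (fun m => dec (b m)))) := by
        funext v
        by_cases hv : v = π
        · subst hv
          rw [Function.update_self]
          unfold toAssign
          rw [dif_pos (Set.mem_insert _ _)]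
          congr 1
          funext k
          simp [extendLetter]
        · rw [Function.update_of_ne hv]
          unfold toAssign
          by_cases hvV : v ∈ V
          · rw [dif_pos (Set.mem_insert_of_mem _ hvV), dif_pos hvV]
            congr 1
            funext k
            simp [extendLetter, hv]
          · rw [dif_neg (by simp [hv, hvV]), dif_neg hvV]
      have hmem := (hD (fun v k => extendLetter π (fun v' => Pa v' k)
          (playG G sDot A ξ F (fun m => dec (b m)) k) v)).mpr
        (by rw [hassign]; exact hF')
      exact dpa_toAPA_accept D _ hmem
    have hcol : (fun k => (productEx G sDot A ξ V π D).color
        (labF G sDot A ξ π Pa F dec D (branchNode b k))) =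
        fun k => D.color (D.run (wordG G sDot A ξ π Pa F (fun m => dec (b m))) k) := by
      funext k
      rw [labF_branch]
      rfl
    show ParityAccept fun k => (productEx G sDot A ξ V π D).color
      (labF G sDot A ξ π Pa F dec D (branchNode b k))
    rw [hcol]
    exact hpar

end HyperATLS
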